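/- Let n ≥ 3 be an integer and 1 < α < n + 1. For every ξ₀ > 0, set c₀ = (2ξ₀² + 1)/ξ₀ and a₀ = ψ_α(c₀)·c₀, where ψ_α(c) = 2 + 3/((1 + (4c² + 1)^{−(n+2−α)/2})^{1/(n−2)} − 1). Then for every ξ with 0 ≤ ξ ≤ ξ₀ and every a ≥ a₀ one has F(n, α, a, ξ) < 0. -/

import Mathlib

set_option maxHeartbeats 400000
open Real intervalIntegral

lemma corepoly (ε : ℝ) (h0 : 0 < ε) (h1 : ε ≤ 1) : (2*ε+3)^3 < (1+ε)^4*(3-ε)^3 := by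
  have hs : (13:ℝ) ≤ 24+51*ε+24*ε^2-7*ε^3-4*ε^4+ε^5 := by
    have h3 : ε^3 ≤ 1 := pow_le_one₀ h0.le h1
    have h4 : ε^4 ≤ 1 := pow_le_one₀ h0.le h1
    nlinarith [pow_nonneg h0.le 5, pow_nonneg h0.le 2, h0.le]
  nlinarith [mul_nonneg (sub_nonneg.2 h1) (by linarith : (0:ℝ) ≤ 24+51*ε+24*ε^2-7*ε^3-4*ε^4+ε^5),
    mul_pos h0 (show (0:ℝ) < 3+(1-ε)*(24+51*ε+24*ε^2-7*ε^3-4*ε^4+ε^5) by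
      nlinarith [mul_nonneg (sub_nonneg.2 h1) (by linarith : (0:ℝ) ≤ 24+51*ε+24*ε^2-7*ε^3-4*ε^4+ε^5)])]

lemma npow_rpow_comm (x : ℝ) (hx : 0 ≤ x) (k : ℕ) (m : ℝ) : (x^k)^m = (x^m)^k := by
  rw [← rpow_natCast x k, ← rpow_natCast (x^m) k, ← rpow_mul hx, ← rpow_mul hx, mul_comm]

lemma core (m p B ε w : ℝ) (hm : 1 ≤ m) (hp : 0 < p) (hpm : p ≤ 2*m)
    (hB : (1+ε)^m = 1+B) (hB0 : 0 < B) (hB1 : B ≤ 1)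
    (hε0 : 0 < ε) (hε1 : ε ≤ 1) (hw : (3-ε)/(2*ε+3) ≤ w) (hw1 : w ≤ 1) :
    1 < (1+15*B)*w^(m+p) := by
  have hm0 : (0:ℝ) < m := by linarith
  set s : ℝ := (3-ε)/(2*ε+3) with hs_def
  have hs0 : (0:ℝ) < s := div_pos (by linarith) (by linarith)
  have hw0 : 0 < w := lt_of_lt_of_le hs0 hw
  have h1 : (1+B)^(4:ℕ) ≤ 1+15*B := by
    have h2 : B^2 ≤ B := by nlinarith
    have h3 : B^3 ≤ B^2 := by nlinarith
    have h4 : B^4 ≤ B^3 := by nlinarith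
    nlinarith
  have hcore : 1 < (1+ε)^(4:ℕ) * s^(3:ℕ) := by
    rw [hs_def, div_pow, ← mul_div_assoc, lt_div_iff₀ (by positivity)]
    nlinarith [corepoly ε hε0 hε1]
  have key : (1:ℝ) < ((1+ε)^(4:ℕ) * s^(3:ℕ)) ^ m := by
    have := rpow_lt_rpow (by norm_num : (0:ℝ) ≤ 1) hcore hm0
    rwa [one_rpow] at this
  have e1 : ((1+ε)^(4:ℕ) * s^(3:ℕ) : ℝ) ^ m = ((1+ε)^m)^(4:ℕ) * (s^m)^(3:ℕ) := by
    rw [mul_rpow (by positivity) (by positivity), npow_rpow_comm _ (by linarith) 4 m,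
      npow_rpow_comm _ hs0.le 3 m]
  have hsw : (s^m)^(3:ℕ) ≤ w^(m+p) := by
    have t1 : s^m ≤ w^m := rpow_le_rpow hs0.le hw hm0.le
    have t2 : (s^m)^(3:ℕ) ≤ (w^m)^(3:ℕ) := pow_le_pow_left₀ (rpow_pos_of_pos hs0 m).le t1 3
    have t3 : (w^m)^(3:ℕ) = w^(3*m) := by
      rw [← npow_rpow_comm w hw0.le 3 m, ← rpow_natCast w 3, ← rpow_mul hw0.le]
      norm_num
    have t4 : w^(3*m) ≤ w^(m+p) := rpow_le_rpow_of_exponent_ge hw0 hw1 (by linarith)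
    calc (s^m)^(3:ℕ) ≤ (w^m)^(3:ℕ) := t2
      _ = w^(3*m) := t3
      _ ≤ w^(m+p) := t4
  calc (1:ℝ) < ((1+ε)^(4:ℕ) * s^(3:ℕ)) ^ m := key
    _ = ((1+ε)^m)^(4:ℕ) * (s^m)^(3:ℕ) := e1
    _ = (1+B)^(4:ℕ) * (s^m)^(3:ℕ) := by rw [hB]
    _ ≤ (1+15*B)*w^(m+p) := by
        apply mul_le_mul h1 hsw (pow_nonneg (rpow_pos_of_pos hs0 m).le 3) (by nlinarith)


section AuxIntegral

lemma gcont (p : ℝ) : Continuous (fun σ : ℝ => (σ^2+1)^(-p) * σ) :=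
  (Continuous.rpow_const (by fun_prop) (fun x => Or.inl (by positivity))).mul continuous_id

lemma gbcont (p b : ℝ) (hb : 0 < b) : Continuous (fun σ : ℝ => (σ^2+b^2)^(-p) * σ) :=
  (Continuous.rpow_const (by fun_prop) (fun x => Or.inl
    (ne_of_gt (by nlinarith [sq_nonneg x, pow_pos hb 2] : (0:ℝ) < x^2+b^2)))).mul continuous_id

lemma Hnonneg (p ξ : ℝ) (hξ : 0 ≤ ξ) : 0 ≤ ∫ σ in (0:ℝ)..ξ, (σ^2+1)^(-p) * σ := by
  apply intervalIntegral.integral_nonneg hξ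
  intro u hu
  exact mul_nonneg (rpow_nonneg (by positivity) _) hu.1

lemma Hle (p ξ : ℝ) (hp : 0 ≤ p) (hξ : 0 ≤ ξ) :
    (∫ σ in (0:ℝ)..ξ, (σ^2+1)^(-p) * σ) ≤ ξ^2/2 := by
  calc (∫ σ in (0:ℝ)..ξ, (σ^2+1)^(-p) * σ) ≤ ∫ σ in (0:ℝ)..ξ, σ := by
        apply intervalIntegral.integral_mono_on hξ ((gcont p).intervalIntegrable _ _)
          intervalIntegral.intervalIntegrable_id
        intro u hu
        calc (u^2+1)^(-p) * u ≤ 1 * u := by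
              apply mul_le_mul_of_nonneg_right _ hu.1
              exact rpow_le_one_of_one_le_of_nonpos (by nlinarith [sq_nonneg u]) (by linarith)
          _ = u := one_mul u
    _ = ξ^2/2 := by rw [integral_id]; ring

lemma gBnd (p K : ℝ) (hp : 0 ≤ p) : ∀ u : ℝ, 0 ≤ u → u ≤ K →
    (K^2+1)^(-p) * u ≤ (u^2+1)^(-p) * u := by
  intro u h0 h1
  apply mul_le_mul_of_nonneg_right _ h0
  exact rpow_le_rpow_of_nonpos (by nlinarith [sq_nonneg u]) (by nlinarith) (by linarith)

lemma HK1 (p K : ℝ) (hp : 0 ≤ p) (hK : 0 ≤ K) :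
    (K^2+1)^(-p) * K^2/2 ≤ ∫ σ in (0:ℝ)..K, (σ^2+1)^(-p) * σ := by
  calc (K^2+1)^(-p)*K^2/2 = ∫ σ in (0:ℝ)..K, (K^2+1)^(-p) * σ := by
        rw [intervalIntegral.integral_const_mul, integral_id]; ring
    _ ≤ _ := by
        apply intervalIntegral.integral_mono_on hK
          ((continuous_const.mul continuous_id).intervalIntegrable _ _)
          ((gcont p).intervalIntegrable _ _)
        intro u hu; exact gBnd p K hp u hu.1 hu.2

lemma HK2 (p ξ K : ℝ) (hp : 0 ≤ p) (h0 : 0 ≤ ξ) (hK : ξ ≤ K) :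
    (∫ σ in (0:ℝ)..ξ, (σ^2+1)^(-p) * σ) + (K^2+1)^(-p) * ((K^2-ξ^2)/2)
      ≤ ∫ σ in (0:ℝ)..K, (σ^2+1)^(-p) * σ := by
  have hsplit : (∫ σ in (0:ℝ)..ξ, (σ^2+1)^(-p) * σ) + (∫ σ in ξ..K, (σ^2+1)^(-p) * σ)
      = ∫ σ in (0:ℝ)..K, (σ^2+1)^(-p) * σ :=
    intervalIntegral.integral_add_adjacent_intervals
      ((gcont p).intervalIntegrable 0 ξ) ((gcont p).intervalIntegrable ξ K)
  have htail : (K^2+1)^(-p) * ((K^2-ξ^2)/2) ≤ ∫ σ in ξ..K, (σ^2+1)^(-p) * σ := by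
    calc (K^2+1)^(-p) * ((K^2-ξ^2)/2) = ∫ σ in ξ..K, (K^2+1)^(-p) * σ := by
          rw [intervalIntegral.integral_const_mul, integral_id]
      _ ≤ _ := by
          apply intervalIntegral.integral_mono_on hK
            ((continuous_const.mul continuous_id).intervalIntegrable _ _)
            ((gcont p).intervalIntegrable _ _)
          intro u hu; exact gBnd p K hp u (le_trans h0 hu.1) hu.2
  linarith

lemma Hb_le (p ξ b w : ℝ) (hp : 0 ≤ p) (hξ : 0 ≤ ξ) (hb : 0 < b)
    (hw0 : 0 < w) (hw1 : w ≤ 1) (hwb : w ≤ b^2) :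
    (∫ σ in (0:ℝ)..ξ, (σ^2+b^2)^(-p) * σ)
      ≤ w^(-p) * ∫ σ in (0:ℝ)..ξ, (σ^2+1)^(-p) * σ := by
  rw [← intervalIntegral.integral_const_mul]
  apply intervalIntegral.integral_mono_on hξ ((gbcont p b hb).intervalIntegrable _ _)
    ((continuous_const.mul (gcont p)).intervalIntegrable _ _)
  intro u hu
  have key : (u^2+b^2)^(-p) ≤ w^(-p) * (u^2+1)^(-p) := by
    rw [← mul_rpow hw0.le (by positivity)]
    apply rpow_le_rpow_of_nonpos (by positivity) ?_ (by linarith)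
    nlinarith [sq_nonneg u]
  calc (u^2+b^2)^(-p)*u ≤ (w^(-p) * (u^2+1)^(-p))*u := mul_le_mul_of_nonneg_right key hu.1
    _ = w^(-p) * ((u^2+1)^(-p)*u) := by ring

lemma subst_left (g : ℝ → ℝ) (a b w K : ℝ) (ha : 0 < a) (hw : w = b - K/a) :
    (∫ t in w..b, g (a*(b-t))) = a⁻¹ * ∫ σ in (0:ℝ)..K, g σ := by
  have h1 : (∫ t in w..b, (fun x => g (a*x)) (b-t)) = ∫ x in (b-b)..(b-w), g (a*x) :=
    intervalIntegral.integral_comp_sub_left (fun x => g (a*x)) b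
  have h2 : b - w = K/a := by rw [hw]; ring
  have h3 : (∫ x in (0:ℝ)..(K/a), g (a*x)) = a⁻¹ • ∫ σ in (a*0)..(a*(K/a)), g σ :=
    intervalIntegral.integral_comp_mul_left g ha.ne'
  rw [show (∫ t in w..b, g (a*(b-t))) = ∫ t in w..b, (fun x => g (a*x)) (b-t) from rfl,
    h1, h2, sub_self, h3, mul_zero, smul_eq_mul, mul_div_cancel₀ _ ha.ne']

lemma subst_right (g : ℝ → ℝ) (a b e ξ : ℝ) (ha : 0 < a) (he : e - b = ξ/a) :
    (∫ t in b..e, g (a*(t-b))) = a⁻¹ * ∫ σ in (0:ℝ)..ξ, g σ := by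
  have h1 : (∫ t in b..e, (fun x => g (a*x)) (t-b)) = ∫ x in (b-b)..(e-b), g (a*x) :=
    intervalIntegral.integral_comp_sub_right (fun x => g (a*x)) b
  have h3 : (∫ x in (0:ℝ)..(ξ/a), g (a*x)) = a⁻¹ • ∫ σ in (a*0)..(a*(ξ/a)), g σ :=
    intervalIntegral.integral_comp_mul_left g ha.ne'
  rw [show (∫ t in b..e, g (a*(t-b))) = ∫ t in b..e, (fun x => g (a*x)) (t-b) from rfl,
    h1, he, sub_self, h3, mul_zero, smul_eq_mul, mul_div_cancel₀ _ ha.ne']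

-- pointwise bound on [w, b]
lemma pt_mid (p a b ξ w t : ℝ) (k : ℕ) (hp : 0 ≤ p) (ha : 0 < a) (hb1 : b ≤ 1)
    (hξ : a*(1-b) = ξ) (hw0 : 0 < w) (ht : t ∈ Set.Icc w b) :
    ((a*(1-t)-ξ)^2 + t^2)^(-p) * (ξ - a*(1-t)) * t^k
      ≤ -(w^k * (((a*(b-t))^2+1)^(-p) * (a*(b-t)))) := by
  obtain ⟨ht1, ht2⟩ := ht
  have ht0 : 0 < t := lt_of_lt_of_le hw0 ht1
  have htle1 : t ≤ 1 := le_trans ht2 hb1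
  have hu0 : 0 ≤ a*(b-t) := mul_nonneg ha.le (by linarith)
  have hmid : ξ - a*(1-t) = -(a*(b-t)) := by rw [← hξ]; ring
  have hXeq : a*(1-t)-ξ = a*(b-t) := by rw [← hξ]; ring
  rw [hmid, hXeq]
  have hX0 : 0 < (a*(b-t))^2 + t^2 := by nlinarith [sq_nonneg (a*(b-t)), pow_pos ht0 2]
  have ht2le : t^2 ≤ 1 := by nlinarith
  have k1 : ((a*(b-t))^2+1)^(-p) ≤ ((a*(b-t))^2 + t^2)^(-p) := by
    apply rpow_le_rpow_of_nonpos hX0 (by nlinarith) (by linarith)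
  have k2 : w^k ≤ t^k := pow_le_pow_left₀ hw0.le ht1 k
  have main : w^k * (((a*(b-t))^2+1)^(-p) * (a*(b-t)))
      ≤ ((a*(b-t))^2+t^2)^(-p) * (a*(b-t)) * t^k := by
    calc w^k * (((a*(b-t))^2+1)^(-p) * (a*(b-t)))
        ≤ t^k * ((((a*(b-t))^2+t^2)^(-p)) * (a*(b-t))) := by
          apply mul_le_mul k2 (mul_le_mul_of_nonneg_right k1 hu0)
            (mul_nonneg (rpow_nonneg (by positivity) _) hu0) (pow_nonneg ht0.le _)
      _ = ((a*(b-t))^2+t^2)^(-p) * (a*(b-t)) * t^k := by ring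
  nlinarith [main]

-- pointwise bound on [b, 1]
lemma pt_right (p a b ξ t : ℝ) (k : ℕ) (hp : 0 ≤ p) (ha : 0 < a) (hb0 : 0 < b)
    (hξ : a*(1-b) = ξ) (ht : t ∈ Set.Icc b 1) :
    ((a*(1-t)-ξ)^2 + t^2)^(-p) * (ξ - a*(1-t)) * t^k
      ≤ ((a*(t-b))^2+b^2)^(-p) * (a*(t-b)) := by
  obtain ⟨ht1, ht2⟩ := ht
  have ht0 : 0 < t := lt_of_lt_of_le hb0 ht1
  have hu0 : 0 ≤ a*(t-b) := mul_nonneg ha.le (by linarith)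
  have hmid : ξ - a*(1-t) = a*(t-b) := by rw [← hξ]; ring
  have hXeq : a*(1-t)-ξ = -(a*(t-b)) := by rw [← hξ]; ring
  rw [hmid, hXeq]
  have hX0 : 0 < (a*(t-b))^2 + b^2 := by nlinarith [sq_nonneg (a*(t-b)), pow_pos hb0 2]
  have k1 : ((-(a*(t-b)))^2+t^2)^(-p) ≤ ((a*(t-b))^2+b^2)^(-p) := by
    apply rpow_le_rpow_of_nonpos hX0 (by nlinarith [pow_le_pow_left₀ hb0.le ht1 2, sq_nonneg (a*(t-b))]) (by linarith)
  have k2 : t^k ≤ 1 := pow_le_one₀ ht0.le ht2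
  calc ((-(a*(t-b)))^2+t^2)^(-p) * (a*(t-b)) * t^k
      ≤ ((-(a*(t-b)))^2+t^2)^(-p) * (a*(t-b)) * 1 := by
        apply mul_le_mul_of_nonneg_left k2
          (mul_nonneg (rpow_nonneg (by positivity) _) hu0)
    _ = ((-(a*(t-b)))^2+t^2)^(-p) * (a*(t-b)) := mul_one _
    _ ≤ ((a*(t-b))^2+b^2)^(-p) * (a*(t-b)) := mul_le_mul_of_nonneg_right k1 hu0

end AuxIntegral


lemma wb2lem (x D w b : ℝ) (hx : 0 ≤ x) (hD : 2*x ≤ D) (hw : w = 1-D) (hb : b = 1-x) :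
    w ≤ b^2 := by nlinarith [sq_nonneg x]

lemma pt_left (p a ξ t : ℝ) (k : ℕ) (ht0 : 0 ≤ t) (h : ξ ≤ a*(1-t)) :
    ((a*(1-t)-ξ)^2+t^2)^(-p) * (ξ - a*(1-t)) * t^k ≤ 0 :=
  mul_nonpos_of_nonpos_of_nonneg
    (mul_nonpos_of_nonneg_of_nonpos (rpow_nonneg (by positivity) _) (by linarith))
    (pow_nonneg ht0 _)

lemma finlem (m p B w HK Hξ Hbξ ξ K : ℝ)
    (hcore : 1 < (1+15*B)*w^(m+p)) (hw0 : 0 < w) (hB0 : 0 < B) (hK0 : 0 < K)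
    (hξ0 : 0 ≤ ξ) (hξK : 4*ξ ≤ K)
    (I5 : 0 ≤ Hξ) (I2 : Hξ ≤ ξ^2/2) (I3 : Hξ + B*((K^2-ξ^2)/2) ≤ HK)
    (I4 : B*K^2/2 ≤ HK) (I1 : Hbξ ≤ w^(-p) * Hξ) : Hbξ < w^m * HK := by
  have hY : (0:ℝ) < w^(m+p) := rpow_pos_of_pos hw0 _
  have hX : (0:ℝ) < w^(-p) := rpow_pos_of_pos hw0 _
  have hZ : (0:ℝ) < w^m := rpow_pos_of_pos hw0 _
  have e : w^(-p) * w^(m+p) = w^m := by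
    rw [← rpow_add hw0]; congr 1; ring
  have I3' : Hξ + B*(15*ξ^2/2) ≤ HK := by
    nlinarith [mul_nonneg hB0.le (by nlinarith : (0:ℝ) ≤ K^2 - 16*ξ^2)]
  rcases lt_or_eq_of_le I5 with hpos|hzero
  · have c1 : (1+15*B)*Hξ ≤ HK := by nlinarith [mul_nonneg hB0.le (by linarith : 0 ≤ ξ^2/2 - Hξ)]
    have hkey : Hξ < w^(m+p) * HK :=
      calc Hξ = 1 * Hξ := (one_mul _).symm
        _ < ((1+15*B)*w^(m+p)) * Hξ := mul_lt_mul_of_pos_right hcore hpos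
        _ = w^(m+p) * ((1+15*B)*Hξ) := by ring
        _ ≤ w^(m+p) * HK := mul_le_mul_of_nonneg_left c1 hY.le
    calc Hbξ ≤ w^(-p) * Hξ := I1
      _ < w^(-p) * (w^(m+p)*HK) := mul_lt_mul_of_pos_left hkey hX
      _ = (w^(-p) * w^(m+p)) * HK := by ring
      _ = w^m * HK := by rw [e]
  · have hHK0 : 0 < HK := lt_of_lt_of_le (by positivity) I4
    calc Hbξ ≤ w^(-p) * Hξ := I1
      _ = 0 := by rw [← hzero, mul_zero]
      _ < w^m * HK := mul_pos hZ hHK0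

/-- `F(n, α, a, ξ) = ∫₀¹ ((a(1−t) − ξ)² + t²)^{(α−n−2)/2} (ξ − a(1−t)) t^{n−2} dt`. -/
noncomputable def F (n : ℕ) (α a ξ : ℝ) : ℝ :=
  ∫ t in (0:ℝ)..1,
    ((a * (1 - t) - ξ) ^ 2 + t ^ 2) ^ ((α - n - 2) / 2) * (ξ - a * (1 - t)) * t ^ (n - 2)

/-- `ψ_α(c)`. -/
noncomputable def psi (n : ℕ) (α c : ℝ) : ℝ :=
  2 + 3 / ((1 + (4 * c ^ 2 + 1) ^ (-(((n : ℝ) + 2 - α) / 2))) ^ (1 / ((n : ℝ) - 2)) - 1)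

theorem stmt_7 (n : ℕ) (hn : 3 ≤ n) (α : ℝ) (hα1 : 1 < α) (hα : α < n + 1)
    (ξ₀ : ℝ) (hξ₀ : 0 < ξ₀) (ξ a : ℝ) (hξ0 : 0 ≤ ξ) (hξ : ξ ≤ ξ₀)
    (ha : psi n α ((2 * ξ₀ ^ 2 + 1) / ξ₀) * ((2 * ξ₀ ^ 2 + 1) / ξ₀) ≤ a) :
    F n α a ξ < 0 := by
  unfold psi at ha
  set c : ℝ := (2 * ξ₀ ^ 2 + 1) / ξ₀ with hc_def
  clear_value c
  have hc0 : 0 < c := by rw [hc_def]; positivity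
  have hξ₀c : 2*ξ₀ ≤ c := by rw [hc_def, le_div_iff₀ hξ₀]; nlinarith
  have hξc : ξ ≤ c := by nlinarith
  set p : ℝ := ((n : ℝ) + 2 - α) / 2 with hp_def
  clear_value p
  have hn3 : (3:ℝ) ≤ (n:ℝ) := by exact_mod_cast hn
  have hp0 : 0 < p := by rw [hp_def]; linarith
  set m : ℝ := (n : ℝ) - 2 with hm_def
  clear_value m
  have hm1 : 1 ≤ m := by rw [hm_def]; linarith
  have hpm : p ≤ 2*m := by rw [hp_def, hm_def]; linarith
  set K : ℝ := 2*c with hK_def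
  clear_value K
  have hK0 : 0 < K := by rw [hK_def]; linarith
  set B : ℝ := (4 * c ^ 2 + 1) ^ (-p) with hB_def
  clear_value B
  have hbase1 : (1:ℝ) < 4*c^2+1 := by nlinarith
  have hB0 : 0 < B := by rw [hB_def]; exact rpow_pos_of_pos (by linarith) _
  have hB1 : B < 1 := by rw [hB_def]; exact rpow_lt_one_of_one_lt_of_neg hbase1 (by linarith)
  set ε : ℝ := (1 + B) ^ (1/m) - 1 with hε_def
  clear_value ε
  have hm0 : (0:ℝ) < m := by linarith
  have hε0 : 0 < ε := by
    have h : 1 < (1+B) ^ (1/m) := by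
      rw [one_lt_rpow_iff_of_pos (by linarith : (0:ℝ) < 1 + B)]
      exact Or.inl ⟨by linarith, by positivity⟩
    rw [hε_def]; linarith
  have hε1 : ε ≤ 1 := by
    have h : (1+B) ^ (1/m) ≤ (1+B) ^ (1:ℝ) :=
      rpow_le_rpow_of_exponent_le (by linarith) (by rw [div_le_one (by linarith)]; linarith)
    rw [rpow_one] at h; rw [hε_def]; linarith
  have hBε : (1+ε)^m = 1+B := by
    have h : 1 + ε = (1+B) ^ (1/m) := by rw [hε_def]; ring
    rw [h, ← rpow_mul (by linarith : (0:ℝ) ≤ 1+B), one_div, inv_mul_cancel₀ hm0.ne', rpow_one]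
  have ha2 : (2 + 3/ε)*c ≤ a := ha
  have ha0 : 0 < a := lt_of_lt_of_le (by positivity) ha2
  have hca : 2*c ≤ a := by
    have : 0 < 3/ε := by positivity
    nlinarith
  have hξa : ξ < a := by linarith
  set D : ℝ := (ξ + K)/a with hD_def
  clear_value D
  have hD0 : 0 ≤ D := by rw [hD_def]; positivity
  have hDε : D ≤ 3*ε/(2*ε+3) := by
    rw [hD_def, div_le_div_iff₀ ha0 (by linarith)]
    have h1 : ε * a ≥ (2*ε+3)*c := by
      have := mul_le_mul_of_nonneg_left ha2 hε0.le
      calc (2*ε+3)*c = ε * ((2+3/ε)*c) := by field_simp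
        _ ≤ ε * a := this
    have h2 : ξ + K ≤ 3*c := by rw [hK_def]; linarith
    nlinarith
  set w : ℝ := 1 - D with hw_def
  clear_value w
  have hsw : (3-ε)/(2*ε+3) ≤ w := by
    have he : (3-ε)/(2*ε+3) = 1 - 3*ε/(2*ε+3) := by field_simp; ring
    rw [hw_def, he]; linarith
  have hw0 : 0 < w := lt_of_lt_of_le (div_pos (by linarith) (by linarith)) hsw
  have hw1 : w ≤ 1 := by rw [hw_def]; linarith
  have hcore := core m p B ε w hm1 hp0 hpm hBε hB0 hB1.le hε0 hε1 hsw hw1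
  -- geometry of the split point
  set b : ℝ := 1 - ξ/a with hb_def
  clear_value b
  have hξa' : ξ/a < 1 := (div_lt_one ha0).2 hξa
  have hb0 : 0 < b := by rw [hb_def]; linarith
  have hb1 : b ≤ 1 := by
    have : 0 ≤ ξ/a := div_nonneg hξ0 ha0.le
    rw [hb_def]; linarith

  have hwb : w = b - K/a := by rw [hw_def, hb_def, hD_def]; ring
  have hKa : 0 ≤ K/a := by positivity
  have hwble : w ≤ b := by rw [hwb]; linarith
  set f : ℝ → ℝ := fun t => ((a*(1-t)-ξ)^2 + t^2) ^ (-p) * (ξ - a*(1-t)) * t^(n-2) with hf_def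
  have hF : F n α a ξ = ∫ t in (0:ℝ)..1, f t := by
    rw [F, hf_def]
    simp only [show (α - (n:ℝ) - 2)/2 = -p from by rw [hp_def]; ring]
  have hbase : ∀ t ∈ Set.Icc (0:ℝ) 1, 0 < (a*(1-t)-ξ)^2 + t^2 := by
    intro t ht
    rcases eq_or_lt_of_le ht.1 with h|h
    · have h1 : 0 < (a - ξ)^2 := pow_pos (by linarith) 2
      have e : (a*(1-(0:ℝ))-ξ)^2 + (0:ℝ)^2 = (a-ξ)^2 := by ring
      rw [← h, e]; exact h1
    · linarith [sq_nonneg (a*(1-t)-ξ), pow_pos h 2]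
  have hfc : ContinuousOn f (Set.Icc 0 1) := by
    rw [hf_def]
    apply ContinuousOn.mul
    apply ContinuousOn.mul
    · apply ContinuousOn.rpow_const
      · fun_prop
      · intro t ht; exact Or.inl (hbase t ht).ne'
    · fun_prop
    · fun_prop
  have hint : ∀ x y : ℝ, 0 ≤ x → x ≤ y → y ≤ 1 →
      IntervalIntegrable f MeasureTheory.volume x y := by
    intro x y h1 h2 h3
    exact (hfc.mono (by rw [Set.uIcc_of_le h2]; exact Set.Icc_subset_Icc h1 h3)).intervalIntegrable
  have hξab : a*(1-b) = ξ := by rw [hb_def]; field_simp; ring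
  set HK : ℝ := ∫ σ in (0:ℝ)..K, (σ^2+1)^(-p) * σ with hHK_def
  set Hξ : ℝ := ∫ σ in (0:ℝ)..ξ, (σ^2+1)^(-p) * σ with hHξ_def
  set Hbξ : ℝ := ∫ σ in (0:ℝ)..ξ, (σ^2+b^2)^(-p) * σ with hHbξ_def
  have hBK : B = (K^2+1)^(-p) := by rw [hB_def, hK_def]; congr 1; ring
  have hξK4 : 4*ξ ≤ K := by rw [hK_def]; linarith
  have I5 : 0 ≤ Hξ := by rw [hHξ_def]; exact Hnonneg p ξ hξ0
  have I2 : Hξ ≤ ξ^2/2 := by rw [hHξ_def]; exact Hle p ξ hp0.le hξ0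
  have I3 : Hξ + B*((K^2-ξ^2)/2) ≤ HK := by
    rw [hHξ_def, hHK_def, hBK]; exact HK2 p ξ K hp0.le hξ0 (by linarith)
  have I4 : B*K^2/2 ≤ HK := by rw [hHK_def, hBK]; exact HK1 p K hp0.le hK0.le
  have hwb2 : w ≤ b^2 := by
    apply wb2lem (ξ/a) D w b (by positivity) ?_ hw_def hb_def
    have h1 : D - 2*(ξ/a) = (K-ξ)/a := by rw [hD_def]; ring
    have h2 : 0 ≤ (K-ξ)/a := div_nonneg (by linarith) ha0.le
    linarith
  have I1 : Hbξ ≤ w^(-p) * Hξ := by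
    rw [hHbξ_def, hHξ_def]; exact Hb_le p ξ b w hp0.le hξ0 hb0 hw0 hw1 hwb2
  have final : Hbξ < w^m * HK :=
    finlem m p B w HK Hξ Hbξ ξ K hcore hw0 hB0 hK0 hξ0 hξK4 I5 I2 I3 I4 I1
  have S1 : (∫ t in (0:ℝ)..w, f t) ≤ 0 := by
    have h0 : (∫ t in (0:ℝ)..w, f t) ≤ ∫ t in (0:ℝ)..w, (0:ℝ) := by
      apply intervalIntegral.integral_mono_on hw0.le (hint 0 w le_rfl hw0.le (by linarith))
        intervalIntegrable_const
      intro t ht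
      rw [hf_def]
      apply pt_left p a ξ t (n-2) ht.1
      have haw : a*(1-w) = ξ + K := by rw [hw_def, hD_def]; field_simp; ring
      have h2 : a*(1-w) ≤ a*(1-t) := by
        apply mul_le_mul_of_nonneg_left (by linarith [ht.2]) ha0.le
      linarith
    simpa using h0
  have S2 : (∫ t in w..b, f t) ≤ -(w^(n-2) * (a⁻¹ * HK)) := by
    have step1 : (∫ t in w..b, f t)
        ≤ ∫ t in w..b, -(w^(n-2) * (((a*(b-t))^2+1)^(-p) * (a*(b-t)))) := by
      apply intervalIntegral.integral_mono_on hwble (hint w b hw0.le hwble hb1) ?_ ?_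
      · exact (Continuous.neg (continuous_const.mul
          ((gcont p).comp (by fun_prop)))).intervalIntegrable _ _
      · intro t ht
        rw [hf_def]
        exact pt_mid p a b ξ w t (n-2) hp0.le ha0 hb1 hξab hw0 ht
    have step2 : (∫ t in w..b, -(w^(n-2) * (((a*(b-t))^2+1)^(-p) * (a*(b-t)))))
        = -(w^(n-2) * (a⁻¹ * HK)) := by
      rw [intervalIntegral.integral_neg, intervalIntegral.integral_const_mul]
      have e := subst_left (fun σ : ℝ => (σ^2+1)^(-p) * σ) a b w K ha0 hwb
      rw [hHK_def, e]
    linarith [step1, step2]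
  have S3 : (∫ t in b..1, f t) ≤ a⁻¹ * Hbξ := by
    have step1 : (∫ t in b..1, f t) ≤ ∫ t in b..1, ((a*(t-b))^2+b^2)^(-p) * (a*(t-b)) := by
      apply intervalIntegral.integral_mono_on hb1 (hint b 1 hb0.le hb1 le_rfl) ?_ ?_
      · exact ((gbcont p b hb0).comp (by fun_prop)).intervalIntegrable _ _
      · intro t ht
        rw [hf_def]
        exact pt_right p a b ξ t (n-2) hp0.le ha0 hb0 hξab ht
    have step2 : (∫ t in b..1, ((a*(t-b))^2+b^2)^(-p) * (a*(t-b))) = a⁻¹ * Hbξ := by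
      have e := subst_right (fun σ : ℝ => (σ^2+b^2)^(-p) * σ) a b 1 ξ ha0 (by rw [hb_def]; ring)
      rw [hHbξ_def, e]
    linarith [step1, step2]
  have hsum1 : (∫ t in (0:ℝ)..w, f t) + (∫ t in w..b, f t) = ∫ t in (0:ℝ)..b, f t :=
    intervalIntegral.integral_add_adjacent_intervals (hint 0 w le_rfl hw0.le (by linarith))
      (hint w b hw0.le hwble hb1)
  have hsum2 : (∫ t in (0:ℝ)..b, f t) + (∫ t in b..1, f t) = ∫ t in (0:ℝ)..1, f t :=
    intervalIntegral.integral_add_adjacent_intervals (hint 0 b le_rfl hb0.le hb1)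
      (hint b 1 hb0.le hb1 le_rfl)
  have hwm : w^(n-2) = w^m := by
    rw [← rpow_natCast w (n-2), hm_def]
    congr 1
    rw [Nat.cast_sub (by omega)]
    norm_num
  have step : a⁻¹ * Hbξ < a⁻¹ * (w^m * HK) := by
    exact mul_lt_mul_of_pos_left final (inv_pos.2 ha0)
  have e2 : a⁻¹ * (w^m * HK) = w^m * (a⁻¹ * HK) := by ring
  calc F n α a ξ = ((∫ t in (0:ℝ)..w, f t) + (∫ t in w..b, f t)) + (∫ t in b..1, f t) := by
        rw [hF, ← hsum2, ← hsum1]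
    _ ≤ (0 + -(w^(n-2)*(a⁻¹*HK))) + a⁻¹*Hbξ := add_le_add (add_le_add S1 S2) S3
    _ < 0 := by rw [hwm]; linarith [step, e2]
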